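/- arXiv:2011.02405 — 2 statements merged into one kernel-verified Lean document; each statement's English description precedes it below -/
import Mathlib

section
/- Let X = ℝ × 𝕋, let a, b ∈ ℝ with a > 0, and let α be the topological automorphism α(t,z) = (a·t, e^{i·b·t}·z^{−1}) of X. Let μ_1, μ_2 be probability measures on X and suppose Measure.map ((x,y) ↦ (x + y, x + α(y))) (μ_1 ⊗ μ_2) = Measure.map ((x,y) ↦ (x + y, −(x + α(y)))) (μ_1 ⊗ μ_2). Then there exist x_1, x_2 ∈ X such that the shifted measures λ_j = μ_j * δ_{−x_j} are concentrated on the subgroup {0} × 𝕋 (λ_j({0} × 𝕋) = 1), and there exists a probability measure ω on X with ω(G) = 1 such that either λ_2 = λ_1 * ω or λ_1 = λ_2 * ω. -/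
open MeasureTheory Complex

noncomputable instance : MeasurableSpace Circle := borel Circle
instance : BorelSpace Circle := ⟨rfl⟩
noncomputable instance : MeasurableSpace (Additive Circle) :=
  inferInstanceAs (MeasurableSpace Circle)

/-- The group `X = ℝ × 𝕋`, with the circle written additively. -/
abbrev XT : Type := ℝ × Additive Circle

/-- The element `−1` of the circle group. -/
def negOneCircle : Circle := ⟨-1, by simp [Submonoid.unitSphere]⟩

/-- The automorphism `α(t,z) = (a·t, e^{i·b·t}·z⁻¹)` of `ℝ × 𝕋`. -/
noncomputable def alphaXTinv (a b : ℝ) : XT → XT :=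
  fun x => (a * x.1, Additive.ofMul (Circle.exp (b * x.1)) - x.2)

/-- The two-element subgroup `G = {(0,1), (0,−1)}` of `ℝ × 𝕋`. -/
def setG : Set XT :=
  {x | x.1 = 0 ∧ (x.2.toMul = (1 : Circle) ∨ x.2.toMul = negOneCircle)}

namespace Heyde

instance : BorelSpace (Additive Circle) := ⟨rfl⟩
instance : SecondCountableTopology (Additive Circle) :=
  inferInstanceAs (SecondCountableTopology Circle)

lemma circle_coe_zpow (z : Circle) (n : ℤ) : ((z ^ n : Circle) : ℂ) = (z : ℂ) ^ n := by
  cases n with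
  | ofNat k =>
    rw [Int.ofNat_eq_coe, zpow_natCast, zpow_natCast]; norm_cast
  | negSucc k => rw [zpow_negSucc, zpow_negSucc, Circle.coe_inv]; norm_cast

/-- The characters of `XT`. -/
noncomputable def chi (s : ℝ) (n : ℤ) (x : XT) : ℂ :=
  Complex.exp ((s * x.1 : ℝ) * Complex.I) * ((x.2.toMul ^ n : Circle) : ℂ)

lemma continuous_chi (s : ℝ) (n : ℤ) : Continuous (chi s n) := by
  unfold chi
  apply Continuous.mul
  · exact Complex.continuous_exp.comp
      ((Complex.continuous_ofReal.comp (continuous_const.mul continuous_fst)).mul continuous_const)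
  · have h : Continuous fun x : XT => (Additive.toMul x.2) ^ n :=
      (continuous_zpow n).comp (continuous_toMul.comp continuous_snd)
    exact h.subtype_val

lemma norm_chi (s : ℝ) (n : ℤ) (x : XT) : ‖chi s n x‖ = 1 := by
  unfold chi
  rw [norm_mul, Complex.norm_exp_ofReal_mul_I]
  have : ‖((x.2.toMul ^ n : Circle) : ℂ)‖ = 1 := Circle.norm_coe _
  rw [this]; ring

lemma chi_mul (s t : ℝ) (n k : ℤ) (x : XT) :
    chi s n x * chi t k x = chi (s + t) (n + k) x := by
  unfold chi
  rw [zpow_add, Circle.coe_mul]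
  rw [show ((s + t) * x.1 : ℝ) = (s * x.1 : ℝ) + (t * x.1 : ℝ) by ring]
  push_cast
  rw [add_mul, Complex.exp_add]
  ring

lemma chi_add (s : ℝ) (n : ℤ) (x y : XT) :
    chi s n (x + y) = chi s n x * chi s n y := by
  unfold chi
  have h1 : (x + y).1 = x.1 + y.1 := rfl
  have h2 : (x + y).2.toMul = x.2.toMul * y.2.toMul := rfl
  rw [h1, h2, mul_zpow, Circle.coe_mul]
  rw [show (s * (x.1 + y.1) : ℝ) = (s * x.1 : ℝ) + (s * y.1 : ℝ) by ring]
  push_cast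
  rw [add_mul, Complex.exp_add]
  ring

lemma chi_neg (s : ℝ) (n : ℤ) (x : XT) : chi s n (-x) = chi (-s) (-n) x := by
  unfold chi
  have h1 : (-x).1 = -x.1 := rfl
  have h2 : (-x).2.toMul = (x.2.toMul)⁻¹ := rfl
  rw [h1, h2, inv_zpow, ← zpow_neg]
  rw [show (s * -x.1 : ℝ) = (-s * x.1 : ℝ) by ring]

lemma chi_alpha (a b u : ℝ) (m : ℤ) (y : XT) :
    chi u m (alphaXTinv a b y) = chi (a * u + b * m) (-m) y := by
  unfold chi alphaXTinv
  have h2 : (Additive.ofMul (Circle.exp (b * y.1)) - y.2).toMul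
      = Circle.exp (b * y.1) * (y.2.toMul)⁻¹ := rfl
  simp only [h2]
  rw [mul_zpow, Circle.coe_mul, inv_zpow, ← zpow_neg, circle_coe_zpow, Circle.coe_exp]
  rw [show ((b * y.1 : ℝ) : ℂ) * Complex.I = ((b * y.1 : ℝ) * Complex.I) from rfl]
  rw [← Complex.exp_int_mul, ← mul_assoc, ← Complex.exp_add]
  congr 2
  push_cast
  ring


/-- Characteristic function of a measure on `XT`. -/
noncomputable def charXT (μ : Measure XT) (s : ℝ) (n : ℤ) : ℂ := ∫ x, chi s n x ∂μ

lemma integrable_chi (μ : Measure XT) [IsFiniteMeasure μ] (s : ℝ) (n : ℤ) :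
    Integrable (chi s n) μ := by
  refine Integrable.mono' (integrable_const 1) (continuous_chi s n).aestronglyMeasurable ?_
  exact Filter.Eventually.of_forall fun x => le_of_eq (norm_chi s n x)

lemma norm_charXT_le_one (μ : Measure XT) [IsProbabilityMeasure μ] (s : ℝ) (n : ℤ) :
    ‖charXT μ s n‖ ≤ 1 := by
  calc ‖charXT μ s n‖ ≤ 1 * (μ Set.univ).toReal :=
        norm_integral_le_of_norm_le_const (Filter.Eventually.of_forall fun x => le_of_eq (norm_chi s n x))
    _ = 1 := by simp

lemma charXT_zero_zero (μ : Measure XT) [IsProbabilityMeasure μ] : charXT μ 0 0 = 1 := by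
  unfold charXT chi
  simp

lemma charXT_conv (μ ν : Measure XT) [IsProbabilityMeasure μ] [IsProbabilityMeasure ν]
    (s : ℝ) (n : ℤ) :
    charXT (μ ∗ ν) s n = charXT μ s n * charXT ν s n := by
  unfold charXT
  have hadd : Measurable fun p : XT × XT => p.1 + p.2 := measurable_add
  rw [show μ ∗ ν = Measure.map (fun p : XT × XT => p.1 + p.2) (μ.prod ν) from rfl]
  rw [integral_map hadd.aemeasurable ((continuous_chi s n).aestronglyMeasurable)]
  rw [show (fun p : XT × XT => chi s n (p.1 + p.2)) = fun p : XT × XT => chi s n p.1 * chi s n p.2 by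
    funext p; exact chi_add s n p.1 p.2]
  exact integral_prod_mul (chi s n) (chi s n)

instance conv_prob (μ ν : Measure XT) [IsProbabilityMeasure μ] [IsProbabilityMeasure ν] :
    IsProbabilityMeasure (μ ∗ ν) := by
  rw [show μ ∗ ν = Measure.map (fun p : XT × XT => p.1 + p.2) (μ.prod ν) from rfl]
  exact Measure.isProbabilityMeasure_map (measurable_add (M := XT)).aemeasurable

lemma conv_dirac_eq (μ : Measure XT) [IsProbabilityMeasure μ] (y : XT) :
    μ ∗ Measure.dirac y = Measure.map (fun x => x + y) μ := by
  rw [show μ ∗ Measure.dirac y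
      = Measure.map (fun p : XT × XT => p.1 + p.2) (μ.prod (Measure.dirac y)) from rfl]
  rw [Measure.prod_dirac, Measure.map_map measurable_add
    (show Measurable fun x : XT => (x, y) from measurable_id.prodMk measurable_const)]
  simp [Function.comp_def]

lemma charXT_map_add (μ : Measure XT) [IsProbabilityMeasure μ] (y : XT) (s : ℝ) (n : ℤ) :
    charXT (Measure.map (fun x => x + y) μ) s n = charXT μ s n * chi s n y := by
  unfold charXT
  rw [integral_map (measurable_add_const y).aemeasurable (continuous_chi s n).aestronglyMeasurable]
  simp_rw [chi_add s n _ y]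
  exact integral_mul_const _ _


lemma continuous_alpha (a b : ℝ) : Continuous (alphaXTinv a b) := by
  unfold alphaXTinv
  refine Continuous.prodMk (continuous_const.mul continuous_fst) ?_
  exact (continuous_ofMul.comp (Circle.exp.continuous.comp
    (continuous_const.mul continuous_fst))).sub continuous_snd

lemma master (a b : ℝ) (μ₁ μ₂ : Measure XT) [IsProbabilityMeasure μ₁] [IsProbabilityMeasure μ₂]
    (hsym :
      Measure.map (fun p : XT × XT => (p.1 + p.2, p.1 + alphaXTinv a b p.2))
          (μ₁.prod μ₂) =
        Measure.map (fun p : XT × XT => (p.1 + p.2, -(p.1 + alphaXTinv a b p.2)))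
          (μ₁.prod μ₂))
    (s u : ℝ) (n m : ℤ) :
    charXT μ₁ (s + u) (n + m) * charXT μ₂ (s + a * u + b * m) (n - m)
      = charXT μ₁ (s - u) (n - m) * charXT μ₂ (s - a * u - b * m) (n + m) := by
  have hTc : Continuous fun p : XT × XT => (p.1 + p.2, p.1 + alphaXTinv a b p.2) :=
    (continuous_fst.add continuous_snd).prodMk
      (continuous_fst.add ((continuous_alpha a b).comp continuous_snd))
  have hT'c : Continuous fun p : XT × XT => (p.1 + p.2, -(p.1 + alphaXTinv a b p.2)) :=
    (continuous_fst.add continuous_snd).prodMk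
      (continuous_fst.add ((continuous_alpha a b).comp continuous_snd)).neg
  have hfc : Continuous fun y : XT × XT => chi s n y.1 * chi u m y.2 :=
    ((continuous_chi s n).comp continuous_fst).mul ((continuous_chi u m).comp continuous_snd)
  have key := congrArg (fun ρ : Measure (XT × XT) =>
    ∫ y, chi s n y.1 * chi u m y.2 ∂ρ) hsym
  rw [integral_map hTc.measurable.aemeasurable hfc.aestronglyMeasurable,
      integral_map hT'c.measurable.aemeasurable hfc.aestronglyMeasurable] at key
  have e1 : ∀ p : XT × XT,
      chi s n (p.1 + p.2) * chi u m (p.1 + alphaXTinv a b p.2)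
        = chi (s + u) (n + m) p.1 * chi (s + a * u + b * m) (n - m) p.2 := by
    intro p
    rw [chi_add s n, chi_add u m, chi_alpha, mul_mul_mul_comm, chi_mul, chi_mul]
    rw [show s + (a * u + b * (m:ℝ)) = s + a * u + b * m by ring,
        show n + -m = n - m by omega]
  have e2 : ∀ p : XT × XT,
      chi s n (p.1 + p.2) * chi u m (-(p.1 + alphaXTinv a b p.2))
        = chi (s - u) (n - m) p.1 * chi (s - a * u - b * m) (n + m) p.2 := by
    intro p
    rw [chi_neg, chi_add s n, chi_add (-u) (-m), chi_alpha, mul_mul_mul_comm, chi_mul, chi_mul]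
    rw [show s + -u = s - u by ring, show n + -m = n - m by omega,
        show s + (a * -u + b * ((-m : ℤ):ℝ)) = s - a * u - b * m by push_cast; ring,
        show n + - -m = n + m by omega]
  have L1 : ∫ p, chi s n ((fun p : XT × XT => (p.1 + p.2, p.1 + alphaXTinv a b p.2)) p).1
        * chi u m ((fun p : XT × XT => (p.1 + p.2, p.1 + alphaXTinv a b p.2)) p).2 ∂(μ₁.prod μ₂)
      = charXT μ₁ (s + u) (n + m) * charXT μ₂ (s + a * u + b * m) (n - m) := by
    refine Eq.trans (integral_congr_ae (Filter.Eventually.of_forall fun p => ?_))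
      (integral_prod_mul _ _)
    exact e1 p
  have L2 : ∫ p, chi s n ((fun p : XT × XT => (p.1 + p.2, -(p.1 + alphaXTinv a b p.2))) p).1
        * chi u m ((fun p : XT × XT => (p.1 + p.2, -(p.1 + alphaXTinv a b p.2))) p).2 ∂(μ₁.prod μ₂)
      = charXT μ₁ (s - u) (n - m) * charXT μ₂ (s - a * u - b * m) (n + m) := by
    refine Eq.trans (integral_congr_ae (Filter.Eventually.of_forall fun p => ?_))
      (integral_prod_mul _ _)
    exact e2 p
  rw [L1, L2] at key
  exact key


lemma charXT_congr (μ : Measure XT) {x y : ℝ} {n m : ℤ} (h1 : x = y) (h2 : n = m) :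
    charXT μ x n = charXT μ y m := by rw [h1, h2]

lemma continuous_charXT (μ : Measure XT) [IsProbabilityMeasure μ] (n : ℤ) :
    Continuous fun w : ℝ => charXT μ w n := by
  apply continuous_of_dominated (bound := fun _ => (1:ℝ))
  · exact fun w => (continuous_chi w n).aestronglyMeasurable
  · exact fun w => Filter.Eventually.of_forall fun x => le_of_eq (norm_chi w n x)
  · exact integrable_const 1
  · refine Filter.Eventually.of_forall fun x => ?_
    unfold chi
    exact (Complex.continuous_exp.comp
      ((Complex.continuous_ofReal.comp (continuous_id.mul continuous_const)).mul
        continuous_const)).mul continuous_const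

lemma eq_one_of_abs_re (z : ℂ) (h1 : ‖z‖ = 1) (h2 : z.re = 1) : z = 1 := by
  have hsq : z.re ^ 2 + z.im ^ 2 = 1 := by
    have hn : Complex.normSq z = 1 := by rw [← Complex.sq_norm, h1]; norm_num
    rw [← hn, Complex.normSq_apply]; ring
  have him : z.im = 0 := by nlinarith
  exact Complex.ext (by simp [h2]) (by simp [him])

lemma ae_exp_eq (μ : Measure XT) [IsProbabilityMeasure μ] (u : ℝ)
    (h : ‖charXT μ u 0‖ = 1) :
    ∀ᵐ x ∂μ, Complex.exp ((u * x.1 : ℝ) * Complex.I) = charXT μ u 0 := by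
  set c := charXT μ u 0 with hc
  have hcc : (starRingEnd ℂ) c * c = 1 := by
    rw [mul_comm, Complex.mul_conj]
    rw [show Complex.normSq c = 1 by
      rw [← Complex.sq_norm, h]; norm_num]
    norm_num
  have hint : ∫ x, (starRingEnd ℂ) c * chi u 0 x ∂μ = 1 := by
    rw [integral_const_mul]; exact hcc
  have hintg : Integrable (fun x => (starRingEnd ℂ) c * chi u 0 x) μ :=
    (integrable_chi μ u 0).const_mul _
  have hintg_re : Integrable (fun x => ((starRingEnd ℂ) c * chi u 0 x).re) μ := by
    exact hintg.re
  have hre : ∫ x, ((starRingEnd ℂ) c * chi u 0 x).re ∂μ = 1 := by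
    have := integral_re hintg
    simp only [RCLike.re_to_complex] at this
    rw [this, hint]
    simp
  have habs : ∀ x, ‖(starRingEnd ℂ) c * chi u 0 x‖ = 1 := by
    intro x
    rw [norm_mul, Complex.norm_conj]
    have h1 : ‖c‖ = 1 := by exact h
    have h2 : ‖chi u 0 x‖ = 1 := by exact norm_chi u 0 x
    rw [h1, h2, one_mul]
  have hnn : 0 ≤ᵐ[μ] fun x => 1 - ((starRingEnd ℂ) c * chi u 0 x).re := by
    refine Filter.Eventually.of_forall fun x => ?_
    have := Complex.re_le_norm ((starRingEnd ℂ) c * chi u 0 x)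
    rw [habs x] at this
    simp only [Pi.zero_apply]
    linarith
  have hintg2 : Integrable (fun x => 1 - ((starRingEnd ℂ) c * chi u 0 x).re) μ :=
    (integrable_const 1).sub hintg_re
  have hzero : ∫ x, (1 - ((starRingEnd ℂ) c * chi u 0 x).re) ∂μ = 0 := by
    rw [integral_sub (integrable_const 1) hintg_re]
    rw [show (∫ x, ((starRingEnd ℂ) c * chi u 0 x).re ∂μ) = 1 from hre]
    simp
  have hae := (integral_eq_zero_iff_of_nonneg_ae hnn hintg2).mp hzero
  filter_upwards [hae] with x hx
  simp only [Pi.zero_apply] at hx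
  have hxre : ((starRingEnd ℂ) c * chi u 0 x).re = 1 := by linarith
  have hone : (starRingEnd ℂ) c * chi u 0 x = 1 := eq_one_of_abs_re _ (habs x) hxre
  have : c * ((starRingEnd ℂ) c * chi u 0 x) = c := by rw [hone, mul_one]
  rw [← mul_assoc, mul_comm c, hcc, one_mul] at this
  have hchi : chi u 0 x = Complex.exp ((u * x.1 : ℝ) * Complex.I) := by
    unfold chi; simp
  rw [← hchi]
  exact this

lemma exp_I_inj (t t' : ℝ)
    (h1 : Complex.exp ((t : ℂ) * Complex.I) = Complex.exp ((t' : ℂ) * Complex.I))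
    (h2 : Complex.exp (((2 * Real.pi * t : ℝ) : ℂ) * Complex.I)
        = Complex.exp (((2 * Real.pi * t' : ℝ) : ℂ) * Complex.I)) : t = t' := by
  obtain ⟨k, hk⟩ := Complex.exp_eq_exp_iff_exists_int.mp h1
  obtain ⟨k', hk'⟩ := Complex.exp_eq_exp_iff_exists_int.mp h2
  have e1 : t = t' + k * (2 * Real.pi) := by
    have := congrArg Complex.im hk
    simpa using this
  have e2 : 2 * Real.pi * t = 2 * Real.pi * t' + k' * (2 * Real.pi) := by
    have := congrArg Complex.im hk'
    simpa using this
  by_cases hk0 : (k : ℝ) = 0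
  · rw [e1, hk0]; ring
  · exfalso
    have hpi : Real.pi = (k' : ℝ) / (2 * k * 2) * 2 := by
      field_simp
      nlinarith [Real.pi_pos]
    have hk2 : (2 * (k:ℚ) * 2) ≠ 0 := by
      simp only [mul_ne_zero_iff]
      refine ⟨⟨two_ne_zero, ?_⟩, two_ne_zero⟩
      exact_mod_cast hk0
    exact irrational_pi ⟨(k' : ℚ) / (2 * k * 2) * 2, by push_cast; rw [← hpi]⟩

lemma degenerate_of_norm_one (μ : Measure XT) [IsProbabilityMeasure μ]
    (h : ∀ w : ℝ, ‖charXT μ w 0‖ = 1) :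
    ∃ c : ℝ, μ {x : XT | x.1 = c} = 1 := by
  have h1 := ae_exp_eq μ 1 (h 1)
  have h2 := ae_exp_eq μ (2 * Real.pi) (h (2 * Real.pi))
  set c1 := charXT μ 1 0
  set c2 := charXT μ (2 * Real.pi) 0
  have hmeas : MeasurableSet {x : XT |
      Complex.exp ((1 * x.1 : ℝ) * Complex.I) = c1 ∧
      Complex.exp ((2 * Real.pi * x.1 : ℝ) * Complex.I) = c2} := by
    apply MeasurableSet.inter
    · exact measurableSet_eq_fun
        ((Complex.continuous_exp.comp ((Complex.continuous_ofReal.comp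
          (continuous_const.mul continuous_fst)).mul continuous_const)).measurable)
        measurable_const
    · exact measurableSet_eq_fun
        ((Complex.continuous_exp.comp ((Complex.continuous_ofReal.comp
          (continuous_const.mul continuous_fst)).mul continuous_const)).measurable)
        measurable_const
  have hS : μ {x : XT |
      Complex.exp ((1 * x.1 : ℝ) * Complex.I) = c1 ∧
      Complex.exp ((2 * Real.pi * x.1 : ℝ) * Complex.I) = c2} = 1 := by
    rw [← prob_compl_eq_zero_iff hmeas]
    have hae := h1.and h2
    rw [MeasureTheory.ae_iff] at hae
    exact hae
  have hne : {x : XT |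
      Complex.exp ((1 * x.1 : ℝ) * Complex.I) = c1 ∧
      Complex.exp ((2 * Real.pi * x.1 : ℝ) * Complex.I) = c2}.Nonempty := by
    apply MeasureTheory.nonempty_of_measure_ne_zero (μ := μ)
    rw [hS]; exact one_ne_zero
  obtain ⟨x0, hx01, hx02⟩ := hne
  refine ⟨x0.1, ?_⟩
  have hsub : {x : XT |
      Complex.exp ((1 * x.1 : ℝ) * Complex.I) = c1 ∧
      Complex.exp ((2 * Real.pi * x.1 : ℝ) * Complex.I) = c2} ⊆ {x : XT | x.1 = x0.1} := by
    intro x ⟨hxa, hxb⟩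
    have e1 : Complex.exp ((x.1 : ℂ) * Complex.I) = Complex.exp ((x0.1 : ℂ) * Complex.I) := by
      have := hxa.trans hx01.symm
      simpa using this
    have e2 : Complex.exp (((2 * Real.pi * x.1 : ℝ) : ℂ) * Complex.I)
        = Complex.exp (((2 * Real.pi * x0.1 : ℝ) : ℂ) * Complex.I) := hxb.trans hx02.symm
    exact exp_I_inj x.1 x0.1 e1 e2
  refine le_antisymm (prob_le_one) ?_
  rw [← hS]
  exact measure_mono hsub


lemma norms_one (a b : ℝ) (ha : 0 < a) (μ₁ μ₂ : Measure XT)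
    [IsProbabilityMeasure μ₁] [IsProbabilityMeasure μ₂]
    (hsym :
      Measure.map (fun p : XT × XT => (p.1 + p.2, p.1 + alphaXTinv a b p.2))
          (μ₁.prod μ₂) =
        Measure.map (fun p : XT × XT => (p.1 + p.2, -(p.1 + alphaXTinv a b p.2)))
          (μ₁.prod μ₂)) :
    (∀ w : ℝ, ‖charXT μ₁ w 0‖ = 1) ∧ (∀ w : ℝ, ‖charXT μ₂ w 0‖ = 1) := by
  have h1a : (0:ℝ) < 1 + a := by linarith
  have hstep : ∀ u : ℝ,
      ‖charXT μ₁ (u + u) 0‖ * ‖charXT μ₂ ((1 + a) * u) 0‖ = ‖charXT μ₂ ((1 - a) * u) 0‖ := by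
    intro u
    have hm := master a b μ₁ μ₂ hsym u u 0 0
    rw [charXT_congr μ₁ (rfl : u + u = u + u) (show (0:ℤ) + 0 = 0 by norm_num),
        charXT_congr μ₂ (show u + a * u + b * ((0:ℤ):ℝ) = (1 + a) * u by push_cast; ring)
          (show (0:ℤ) - 0 = 0 by norm_num),
        charXT_congr μ₁ (show u - u = 0 by ring) (show (0:ℤ) - 0 = 0 by norm_num),
        charXT_congr μ₂ (show u - a * u - b * ((0:ℤ):ℝ) = (1 - a) * u by push_cast; ring)
          (show (0:ℤ) + 0 = 0 by norm_num), charXT_zero_zero, one_mul] at hm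
    calc ‖charXT μ₁ (u + u) 0‖ * ‖charXT μ₂ ((1 + a) * u) 0‖
        = ‖charXT μ₁ (u + u) 0 * charXT μ₂ ((1 + a) * u) 0‖ := (norm_mul _ _).symm
      _ = ‖charXT μ₂ ((1 - a) * u) 0‖ := by rw [hm]
  set r : ℝ := (1 - a) / (1 + a) with hr
  have hrabs : |r| < 1 := by
    rw [hr, abs_div, abs_of_pos h1a, div_lt_one h1a]
    rw [abs_lt]
    constructor <;> linarith
  have hle : ∀ u : ℝ, ‖charXT μ₂ ((1 - a) * u) 0‖ ≤ ‖charXT μ₂ ((1 + a) * u) 0‖ := by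
    intro u
    rw [← hstep u]
    exact mul_le_of_le_one_left (norm_nonneg _) (norm_charXT_le_one μ₁ _ _)
  have hrle : ∀ w : ℝ, ‖charXT μ₂ (r * w) 0‖ ≤ ‖charXT μ₂ w 0‖ := by
    intro w
    have := hle (w / (1 + a))
    rw [show (1 - a) * (w / (1 + a)) = r * w by rw [hr]; field_simp,
        show (1 + a) * (w / (1 + a)) = w by field_simp] at this
    exact this
  have hiter : ∀ (k : ℕ) (w : ℝ), ‖charXT μ₂ (r ^ k * w) 0‖ ≤ ‖charXT μ₂ w 0‖ := by
    intro k
    induction k with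
    | zero => intro w; rw [pow_zero, one_mul]
    | succ k ih =>
      intro w
      have h1 : ‖charXT μ₂ (r ^ (k+1) * w) 0‖ ≤ ‖charXT μ₂ (r ^ k * w) 0‖ := by
        have := hrle (r ^ k * w)
        rw [show r * (r ^ k * w) = r ^ (k+1) * w by rw [pow_succ]; ring] at this
        exact this
      exact h1.trans (ih w)
  have hcont : Continuous fun w : ℝ => ‖charXT μ₂ w 0‖ :=
    continuous_norm.comp (continuous_charXT μ₂ 0)
  have hM0 : ‖charXT μ₂ (0:ℝ) 0‖ = 1 := by rw [charXT_zero_zero]; simp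
  have h2 : ∀ w : ℝ, ‖charXT μ₂ w 0‖ = 1 := by
    intro w
    refine le_antisymm (norm_charXT_le_one μ₂ _ _) ?_
    have htd : Filter.Tendsto (fun k : ℕ => r ^ k * w) Filter.atTop (nhds 0) := by
      have := (tendsto_pow_atTop_nhds_zero_of_abs_lt_one hrabs).mul_const w
      rwa [zero_mul] at this
    have htd2 : Filter.Tendsto (fun k : ℕ => ‖charXT μ₂ (r ^ k * w) 0‖) Filter.atTop
        (nhds (1:ℝ)) := by
      have := (hcont.tendsto 0).comp htd
      rwa [hM0] at this
    exact le_of_tendsto htd2 (Filter.Eventually.of_forall fun k => hiter k w)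
  refine ⟨?_, h2⟩
  intro w
  have := hstep (w / 2)
  rw [show w / 2 + w / 2 = w by ring, h2, h2, mul_one] at this
  exact this

lemma marginals_degenerate (a b : ℝ) (ha : 0 < a) (μ₁ μ₂ : Measure XT)
    [IsProbabilityMeasure μ₁] [IsProbabilityMeasure μ₂]
    (hsym :
      Measure.map (fun p : XT × XT => (p.1 + p.2, p.1 + alphaXTinv a b p.2))
          (μ₁.prod μ₂) =
        Measure.map (fun p : XT × XT => (p.1 + p.2, -(p.1 + alphaXTinv a b p.2)))
          (μ₁.prod μ₂)) :
    (∃ c : ℝ, μ₁ {x : XT | x.1 = c} = 1) ∧ (∃ c : ℝ, μ₂ {x : XT | x.1 = c} = 1) := by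
  obtain ⟨hn1, hn2⟩ := norms_one a b ha μ₁ μ₂ hsym
  exact ⟨degenerate_of_norm_one μ₁ hn1, degenerate_of_norm_one μ₂ hn2⟩


/-- Fourier coefficients of the circle part. -/
noncomputable def gM (μ : Measure XT) (n : ℤ) : ℂ := ∫ x, ((x.2.toMul ^ n : Circle) : ℂ) ∂μ

lemma gM_eq_charXT (μ : Measure XT) (n : ℤ) : gM μ n = charXT μ 0 n := by
  unfold gM charXT chi
  simp

lemma gM_zero (μ : Measure XT) [IsProbabilityMeasure μ] : gM μ 0 = 1 := by
  unfold gM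
  simp

lemma gM_neg (μ : Measure XT) (n : ℤ) : gM μ (-n) = (starRingEnd ℂ) (gM μ n) := by
  unfold gM
  rw [← integral_conj]
  congr 1
  funext x
  rw [zpow_neg, Circle.coe_inv_eq_conj]

lemma ae_fst_eq (μ : Measure XT) [IsProbabilityMeasure μ] {c : ℝ}
    (hc : μ {x : XT | x.1 = c} = 1) : ∀ᵐ x ∂μ, x.1 = c := by
  have hmeas : MeasurableSet {x : XT | x.1 = c} :=
    (measurableSet_singleton c).preimage measurable_fst
  rw [MeasureTheory.ae_iff]
  have := (prob_compl_eq_zero_iff hmeas).mpr hc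
  exact this

lemma charXT_of_concentrated (μ : Measure XT) [IsProbabilityMeasure μ] {c : ℝ}
    (hc : μ {x : XT | x.1 = c} = 1) (s : ℝ) (n : ℤ) :
    charXT μ s n = Complex.exp ((s * c : ℝ) * Complex.I) * gM μ n := by
  unfold charXT gM
  rw [← integral_const_mul]
  apply integral_congr_ae
  filter_upwards [ae_fst_eq μ hc] with x hx
  unfold chi
  rw [hx]

section Star

variable (a b : ℝ) (μ₁ μ₂ : Measure XT) [IsProbabilityMeasure μ₁] [IsProbabilityMeasure μ₂]

lemma starEq (c₁ c₂ : ℝ)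
    (hsym :
      Measure.map (fun p : XT × XT => (p.1 + p.2, p.1 + alphaXTinv a b p.2))
          (μ₁.prod μ₂) =
        Measure.map (fun p : XT × XT => (p.1 + p.2, -(p.1 + alphaXTinv a b p.2)))
          (μ₁.prod μ₂))
    (hc1 : μ₁ {x : XT | x.1 = c₁} = 1) (hc2 : μ₂ {x : XT | x.1 = c₂} = 1) (n m : ℤ) :
    gM μ₁ (n + m) * (Complex.exp ((b * c₂ * (m:ℝ) : ℝ) * Complex.I) * gM μ₂ (n - m))
      = gM μ₁ (n - m) * (Complex.exp ((-(b * c₂ * (m:ℝ)) : ℝ) * Complex.I) * gM μ₂ (n + m)) := by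
  have hm := master a b μ₁ μ₂ hsym 0 0 n m
  rw [charXT_congr μ₁ (show (0:ℝ) + 0 = 0 by ring) rfl,
      charXT_congr μ₂ (show (0:ℝ) + a * 0 + b * (m:ℝ) = b * (m:ℝ) by ring) rfl,
      charXT_congr μ₁ (show (0:ℝ) - 0 = 0 by ring) rfl,
      charXT_congr μ₂ (show (0:ℝ) - a * 0 - b * (m:ℝ) = -(b * (m:ℝ)) by ring) rfl] at hm
  rw [charXT_of_concentrated μ₁ hc1, charXT_of_concentrated μ₁ hc1,
      charXT_of_concentrated μ₂ hc2, charXT_of_concentrated μ₂ hc2] at hm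
  rw [show ((0:ℝ) * c₁ : ℝ) = 0 by ring] at hm
  simp only [Complex.ofReal_zero, zero_mul, Complex.exp_zero, one_mul] at hm
  rw [show (b * (m:ℝ) * c₂ : ℝ) = (b * c₂ * (m:ℝ) : ℝ) by ring] at hm
  rw [show (-(b * (m:ℝ)) * c₂ : ℝ) = (-(b * c₂ * (m:ℝ)) : ℝ) by ring] at hm
  exact hm

lemma parityEq (c₁ c₂ : ℝ)
    (hsym :
      Measure.map (fun p : XT × XT => (p.1 + p.2, p.1 + alphaXTinv a b p.2))
          (μ₁.prod μ₂) =
        Measure.map (fun p : XT × XT => (p.1 + p.2, -(p.1 + alphaXTinv a b p.2)))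
          (μ₁.prod μ₂))
    (hc1 : μ₁ {x : XT | x.1 = c₁} = 1) (hc2 : μ₂ {x : XT | x.1 = c₂} = 1)
    (p q : ℤ) (hpq : Even (p - q)) :
    gM μ₁ p * (Complex.exp ((-(b * c₂ * (q:ℝ)) : ℝ) * Complex.I) * gM μ₂ q)
      = gM μ₁ q * (Complex.exp ((-(b * c₂ * (p:ℝ)) : ℝ) * Complex.I) * gM μ₂ p) := by
  obtain ⟨l, hl⟩ := hpq
  set β := b * c₂ with hβ
  have key := starEq a b μ₁ μ₂ c₁ c₂ hsym hc1 hc2 (q + l) l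
  rw [show q + l + l = p by omega, show q + l - l = q by omega] at key
  have e1 : Complex.exp ((-(β * (q:ℝ)) : ℝ) * Complex.I)
      = Complex.exp ((-(β * ((q + l : ℤ):ℝ)) : ℝ) * Complex.I)
        * Complex.exp ((β * ((l:ℤ):ℝ) : ℝ) * Complex.I) := by
    rw [← Complex.exp_add]
    congr 1
    push_cast
    ring
  have e2 : Complex.exp ((-(β * (p:ℝ)) : ℝ) * Complex.I)
      = Complex.exp ((-(β * ((q + l : ℤ):ℝ)) : ℝ) * Complex.I)
        * Complex.exp ((-(β * ((l:ℤ):ℝ)) : ℝ) * Complex.I) := by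
    rw [← Complex.exp_add]
    congr 1
    have hp : p = q + l + l := by omega
    rw [hp]
    push_cast
    ring
  rw [e1, e2]
  calc gM μ₁ p * (Complex.exp ((-(β * ((q + l : ℤ):ℝ)) : ℝ) * Complex.I)
          * Complex.exp ((β * ((l:ℤ):ℝ) : ℝ) * Complex.I) * gM μ₂ q)
      = Complex.exp ((-(β * ((q + l : ℤ):ℝ)) : ℝ) * Complex.I)
          * (gM μ₁ p * (Complex.exp ((β * ((l:ℤ):ℝ) : ℝ) * Complex.I) * gM μ₂ q)) := by ring
    _ = Complex.exp ((-(β * ((q + l : ℤ):ℝ)) : ℝ) * Complex.I)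
          * (gM μ₁ q * (Complex.exp ((-(β * ((l:ℤ):ℝ)) : ℝ) * Complex.I) * gM μ₂ p)) := by
        rw [key]
    _ = gM μ₁ q * (Complex.exp ((-(β * ((q + l : ℤ):ℝ)) : ℝ) * Complex.I)
          * Complex.exp ((-(β * ((l:ℤ):ℝ)) : ℝ) * Complex.I) * gM μ₂ p) := by ring

end Star

lemma kappa_extract (g h : ℤ → ℂ) (hg0 : g 0 = 1) (hh0 : h 0 = 1)
    (hgc : ∀ n : ℤ, g (-n) = (starRingEnd ℂ) (g n))
    (hhc : ∀ n : ℤ, h (-n) = (starRingEnd ℂ) (h n))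
    (hpe : ∀ p q : ℤ, Even (p - q) → g p * h q = g q * h p) :
    ∃ κ : ℝ, |κ| ≤ 1 ∧
      ((∀ n, h n = g n * (if Even n then 1 else (κ:ℂ))) ∨
       (∀ n, g n = h n * (if Even n then 1 else (κ:ℂ)))) := by
  have heven : ∀ p : ℤ, Even p → g p = h p := by
    intro p hp
    have := hpe p 0 (by simpa using hp)
    rw [hh0, hg0, mul_one, one_mul] at this
    exact this
  by_cases hall : ∀ p : ℤ, ¬ Even p → g p = 0
  · refine ⟨0, by norm_num, Or.inr ?_⟩
    intro n
    by_cases he : Even n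
    · rw [if_pos he, mul_one, heven n he]
    · simp only [if_neg he, Complex.ofReal_zero, mul_zero]
      exact hall n he
  · push_neg at hall
    obtain ⟨p0, hp0odd, hp0⟩ := hall
    set κ0 : ℂ := h p0 / g p0 with hκ0
    have hκreal : (starRingEnd ℂ) κ0 = κ0 := by
      have hcj := hpe p0 (-p0) ⟨p0, by ring⟩
      rw [hgc, hhc] at hcj
      rw [hκ0, map_div₀]
      rw [div_eq_div_iff (by simpa using hp0) hp0]
      linear_combination hcj
    have hodd : ∀ p : ℤ, ¬ Even p → h p = κ0 * g p := by
      intro p hp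
      have hq := hpe p0 p (by
        rw [Int.even_sub]
        constructor
        · intro hh; exact absurd hh hp0odd
        · intro hh; exact absurd hh hp)
      rw [hκ0]
      field_simp
      linear_combination hq
    have hκre : ((κ0.re : ℝ) : ℂ) = κ0 := Complex.conj_eq_iff_re.mp hκreal
    by_cases hle : |κ0.re| ≤ 1
    · refine ⟨κ0.re, hle, Or.inl ?_⟩
      intro n
      by_cases he : Even n
      · rw [if_pos he, mul_one, heven n he]
      · rw [if_neg he, hκre, hodd n he, mul_comm]
    · push_neg at hle
      have hκ0ne : κ0 ≠ 0 := by
        intro hz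
        rw [hz] at hle
        norm_num at hle
      refine ⟨(κ0.re)⁻¹, ?_, Or.inr ?_⟩
      · rw [abs_inv]
        have h1 : (0:ℝ) < |κ0.re| := lt_trans one_pos hle
        rw [inv_le_one_iff₀]
        right
        exact hle.le
      · intro n
        by_cases he : Even n
        · rw [if_pos he, mul_one, heven n he]
        · rw [if_neg he]
          have h2 : ((κ0.re⁻¹ : ℝ) : ℂ) = κ0⁻¹ := by rw [Complex.ofReal_inv, hκre]
          rw [h2, hodd n he]
          field_simp


lemma cont_integrable (f : C(Circle, ℂ)) (μ : Measure Circle) [IsFiniteMeasure μ] :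
    Integrable f μ := by
  refine Integrable.mono' (integrable_const ‖f‖) f.continuous.aestronglyMeasurable ?_
  exact Filter.Eventually.of_forall fun x => f.norm_coe_le_norm x

/-- The characters of the circle. -/
noncomputable def chC (n : ℤ) : C(Circle, ℂ) :=
  ⟨fun z => ((z ^ n : Circle) : ℂ), by
    have h : Continuous fun z : Circle => z ^ n := continuous_zpow n
    exact h.subtype_val⟩

lemma chC_apply (n : ℤ) (z : Circle) : chC n z = ((z ^ n : Circle) : ℂ) := rfl

lemma chC_mul (n m : ℤ) : chC n * chC m = chC (n + m) := by
  ext z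
  simp only [ContinuousMap.mul_apply, chC_apply]
  rw [← Circle.coe_mul, ← zpow_add]

lemma chC_zero : chC 0 = 1 := by
  ext z
  simp [chC_apply]

lemma chC_star (n : ℤ) : star (chC n) = chC (-n) := by
  ext z
  simp only [ContinuousMap.star_apply, chC_apply]
  rw [zpow_neg, Circle.coe_inv_eq_conj]
  rfl

lemma circle_ext (ρ σ : Measure Circle) [IsProbabilityMeasure ρ] [IsProbabilityMeasure σ]
    (h : ∀ n : ℤ, (∫ z, ((z ^ n : Circle) : ℂ) ∂ρ) = ∫ z, ((z ^ n : Circle) : ℂ) ∂σ) :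
    ρ = σ := by
  classical
  set Sp : Submodule ℂ C(Circle, ℂ) := Submodule.span ℂ (Set.range chC) with hSp
  have hmem : ∀ n : ℤ, chC n ∈ Sp := fun n => Submodule.subset_span ⟨n, rfl⟩
  have hone : (1 : C(Circle, ℂ)) ∈ Sp := chC_zero ▸ hmem 0
  have hmulgen : ∀ n : ℤ, ∀ g ∈ Sp, chC n * g ∈ Sp := by
    intro n g hg
    refine Submodule.span_induction ?_ ?_ ?_ ?_ hg
    · rintro x ⟨m, rfl⟩
      rw [chC_mul]
      exact hmem _
    · rw [mul_zero]; exact Sp.zero_mem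
    · intro x y hx hy hx' hy'
      rw [mul_add]; exact Sp.add_mem hx' hy'
    · intro c x hx hx'
      rw [mul_smul_comm]; exact Sp.smul_mem c hx'
  have hmul : ∀ f y : C(Circle, ℂ), f ∈ Sp → y ∈ Sp → f * y ∈ Sp := by
    intro f y hf hy
    refine Submodule.span_induction ?_ ?_ ?_ ?_ hf
    · rintro x ⟨m, rfl⟩
      exact hmulgen m y hy
    · rw [zero_mul]; exact Sp.zero_mem
    · intro x z hx hz hx' hz'
      rw [add_mul]; exact Sp.add_mem hx' hz'
    · intro c x hx hx'
      rw [smul_mul_assoc]; exact Sp.smul_mem c hx'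
  have hstar : ∀ f : C(Circle, ℂ), f ∈ Sp → star f ∈ Sp := by
    intro f hf
    refine Submodule.span_induction ?_ ?_ ?_ ?_ hf
    · rintro x ⟨m, rfl⟩
      rw [chC_star]; exact hmem _
    · rw [star_zero]; exact Sp.zero_mem
    · intro x y hx hy hx' hy'
      rw [star_add]; exact Sp.add_mem hx' hy'
    · intro c x hx hx'
      rw [star_smul]; exact Sp.smul_mem _ hx'
  set A : StarSubalgebra ℂ C(Circle, ℂ) :=
    { Sp.toSubalgebra hone (fun x y hx hy => hmul x y hx hy) with
      star_mem' := fun {x} hx => hstar x hx } with hA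
  have hAsep : A.SeparatesPoints := by
    intro x y hxy
    refine ⟨_, ⟨chC 1, ?_, rfl⟩, ?_⟩
    · exact hmem 1
    · simp only [chC_apply, zpow_one]
      exact fun hc => hxy (Subtype.ext hc)
  have hdense := ContinuousMap.starSubalgebra_topologicalClosure_eq_top_of_separatesPoints A hAsep
  -- the set of functions with equal integrals is closed and contains A
  have hcont1 : Continuous fun f : C(Circle, ℂ) => ∫ z, f z ∂ρ := by
    refine Metric.continuous_iff.mpr fun f ε hε => ⟨ε / 2, by linarith, fun g hg => ?_⟩
    have hsub : ∫ z, g z ∂ρ - ∫ z, f z ∂ρ = ∫ z, (g z - f z) ∂ρ := by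
      rw [integral_sub (cont_integrable g ρ) (cont_integrable f ρ)]
    have hb : ‖∫ z, (g z - f z) ∂ρ‖ ≤ dist g f * (ρ Set.univ).toReal := by
      apply norm_integral_le_of_norm_le_const
      refine Filter.Eventually.of_forall fun z => ?_
      have := ContinuousMap.dist_apply_le_dist (f := g) (g := f) z
      rwa [dist_eq_norm] at this
    rw [dist_eq_norm, hsub]
    have : (ρ Set.univ).toReal = 1 := by simp
    rw [this, mul_one] at hb
    calc ‖∫ z, (g z - f z) ∂ρ‖ ≤ dist g f := hb
      _ < ε := lt_of_lt_of_le hg (by linarith)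
  have hcont2 : Continuous fun f : C(Circle, ℂ) => ∫ z, f z ∂σ := by
    refine Metric.continuous_iff.mpr fun f ε hε => ⟨ε / 2, by linarith, fun g hg => ?_⟩
    have hsub : ∫ z, g z ∂σ - ∫ z, f z ∂σ = ∫ z, (g z - f z) ∂σ := by
      rw [integral_sub (cont_integrable g σ) (cont_integrable f σ)]
    have hb : ‖∫ z, (g z - f z) ∂σ‖ ≤ dist g f * (σ Set.univ).toReal := by
      apply norm_integral_le_of_norm_le_const
      refine Filter.Eventually.of_forall fun z => ?_
      have := ContinuousMap.dist_apply_le_dist (f := g) (g := f) z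
      rwa [dist_eq_norm] at this
    rw [dist_eq_norm, hsub]
    have : (σ Set.univ).toReal = 1 := by simp
    rw [this, mul_one] at hb
    calc ‖∫ z, (g z - f z) ∂σ‖ ≤ dist g f := hb
      _ < ε := lt_of_lt_of_le hg (by linarith)
  have hclosed : IsClosed {f : C(Circle, ℂ) | ∫ z, f z ∂ρ = ∫ z, f z ∂σ} :=
    isClosed_eq hcont1 hcont2
  have hsubset : (A : Set C(Circle, ℂ)) ⊆ {f : C(Circle, ℂ) | ∫ z, f z ∂ρ = ∫ z, f z ∂σ} := by
    intro f hf
    have hf' : f ∈ Sp := hf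
    refine Submodule.span_induction ?_ ?_ ?_ ?_ hf'
    · rintro x ⟨m, rfl⟩
      exact h m
    · simp [Set.mem_setOf_eq]
    · intro x y hx hy hx' hy'
      simp only [Set.mem_setOf_eq, ContinuousMap.add_apply] at *
      rw [integral_add (cont_integrable x ρ) (cont_integrable y ρ),
          integral_add (cont_integrable x σ) (cont_integrable y σ), hx', hy']
    · intro c x hx hx'
      simp only [Set.mem_setOf_eq, ContinuousMap.smul_apply] at *
      rw [integral_smul, integral_smul, hx']
  have hall : ∀ f : C(Circle, ℂ), ∫ z, f z ∂ρ = ∫ z, f z ∂σ := by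
    intro f
    have hfmem : f ∈ A.topologicalClosure := by rw [hdense]; trivial
    have : f ∈ closure (A : Set C(Circle, ℂ)) := hfmem
    exact closure_minimal hsubset hclosed this
  -- conclude via bounded continuous nnreal test functions
  apply ext_of_forall_lintegral_eq_of_IsFiniteMeasure
  intro f
  have hkey : (∫ z, ((f z : ℝ) : ℂ) ∂ρ) = ∫ z, ((f z : ℝ) : ℂ) ∂σ :=
    hall ⟨fun z => ((f z : ℝ) : ℂ), Complex.continuous_ofReal.comp
      (NNReal.continuous_coe.comp f.continuous)⟩
  have hint1 : Integrable (fun z => (f z : ℝ)) ρ := f.integrable_of_nnreal ρ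
  have hint2 : Integrable (fun z => (f z : ℝ)) σ := f.integrable_of_nnreal σ
  have hre : (∫ z, (f z : ℝ) ∂ρ) = ∫ z, (f z : ℝ) ∂σ := by
    apply Complex.ofReal_injective
    have h1 : ((∫ z, (f z : ℝ) ∂ρ : ℝ) : ℂ) = ∫ z, ((f z : ℝ) : ℂ) ∂ρ :=
      (integral_ofReal (𝕜 := ℂ) (f := fun z => (f z : ℝ))).symm
    have h2 : ((∫ z, (f z : ℝ) ∂σ : ℝ) : ℂ) = ∫ z, ((f z : ℝ) : ℂ) ∂σ :=
      (integral_ofReal (𝕜 := ℂ) (f := fun z => (f z : ℝ))).symm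
    rw [h1, h2]; exact hkey
  rw [lintegral_coe_eq_integral _ hint1, lintegral_coe_eq_integral _ hint2, hre]


lemma meas_inter_eq (μ : Measure XT) {A : Set XT} (hA : μ Aᶜ = 0) (t : Set XT) :
    μ (t ∩ A) = μ t := by
  refine le_antisymm (measure_mono Set.inter_subset_left) ?_
  calc μ t ≤ μ ((t ∩ A) ∪ Aᶜ) := measure_mono (by
        intro x hx
        by_cases h : x ∈ A
        · exact Or.inl ⟨hx, h⟩
        · exact Or.inr h)
    _ ≤ μ (t ∩ A) + μ Aᶜ := measure_union_le _ _
    _ = μ (t ∩ A) := by rw [hA, add_zero]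

lemma fst_zero_measurable : MeasurableSet {x : XT | x.1 = 0} :=
  (measurableSet_singleton 0).preimage measurable_fst

lemma xt_unique (P Q : Measure XT) [IsProbabilityMeasure P] [IsProbabilityMeasure Q]
    (hP : P {x : XT | x.1 = 0} = 1) (hQ : Q {x : XT | x.1 = 0} = 1)
    (hg : ∀ n : ℤ, gM P n = gM Q n) : P = Q := by
  have hsnd : Measurable fun x : XT => x.2.toMul := measurable_snd
  have hF : Measurable fun z : Circle => ((0:ℝ), Additive.ofMul z) :=
    (continuous_const.prodMk continuous_ofMul).measurable
  have hGmeas : Measurable fun x : XT => ((0:ℝ), x.2) :=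
    measurable_const.prodMk measurable_snd
  have hchar : ∀ (R : Measure XT) (n : ℤ),
      (∫ z, ((z ^ n : Circle) : ℂ) ∂(R.map (fun x : XT => x.2.toMul))) = gM R n := by
    intro R n
    have hc : Continuous fun z : Circle => ((z ^ n : Circle) : ℂ) := by
      have h : Continuous fun z : Circle => z ^ n := continuous_zpow n
      exact h.subtype_val
    rw [integral_map hsnd.aemeasurable hc.aestronglyMeasurable]
    rfl
  haveI : IsProbabilityMeasure (P.map (fun x : XT => x.2.toMul)) :=
    Measure.isProbabilityMeasure_map hsnd.aemeasurable
  haveI : IsProbabilityMeasure (Q.map (fun x : XT => x.2.toMul)) :=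
    Measure.isProbabilityMeasure_map hsnd.aemeasurable
  have hcirc : P.map (fun x : XT => x.2.toMul) = Q.map (fun x : XT => x.2.toMul) := by
    apply circle_ext
    intro n
    rw [hchar P n, hchar Q n, hg n]
  have hrec : ∀ (R : Measure XT), IsProbabilityMeasure R → R {x : XT | x.1 = 0} = 1 →
      R = (R.map (fun x : XT => x.2.toMul)).map
        (fun z : Circle => ((0:ℝ), Additive.ofMul z)) := by
    intro R hRP hR
    rw [Measure.map_map hF hsnd]
    have hcomp : ((fun z : Circle => ((0:ℝ), Additive.ofMul z)) ∘ fun x : XT => x.2.toMul)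
        = fun x : XT => ((0:ℝ), x.2) := rfl
    rw [hcomp]
    have hAc : R {x : XT | x.1 = 0}ᶜ = 0 := (prob_compl_eq_zero_iff fst_zero_measurable).mpr hR
    ext s hs
    rw [Measure.map_apply hGmeas hs]
    have h1 : ((fun x : XT => ((0:ℝ), x.2)) ⁻¹' s) ∩ {x : XT | x.1 = 0}
        = s ∩ {x : XT | x.1 = 0} := by
      ext x
      simp only [Set.mem_inter_iff, Set.mem_preimage, Set.mem_setOf_eq]
      constructor
      · rintro ⟨hxs, hx0⟩
        refine ⟨?_, hx0⟩
        have : ((0:ℝ), x.2) = x := by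
          ext
          · exact hx0.symm
          · rfl
        rwa [this] at hxs
      · rintro ⟨hxs, hx0⟩
        refine ⟨?_, hx0⟩
        have : ((0:ℝ), x.2) = x := by
          ext
          · exact hx0.symm
          · rfl
        rwa [this]
    rw [← meas_inter_eq R hAc ((fun x : XT => ((0:ℝ), x.2)) ⁻¹' s), h1,
        meas_inter_eq R hAc s]
  rw [hrec P ‹_› hP, hrec Q ‹_› hQ, hcirc]

lemma conv_conc (P Q : Measure XT) [IsProbabilityMeasure P] [IsProbabilityMeasure Q]
    (hP : P {x : XT | x.1 = 0} = 1) (hQ : Q {x : XT | x.1 = 0} = 1) :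
    Measure.conv P Q {x : XT | x.1 = 0} = 1 := by
  have : Measure.conv P Q = Measure.map (fun p : XT × XT => p.1 + p.2) (P.prod Q) := rfl
  rw [this, Measure.map_apply measurable_add fst_zero_measurable]
  haveI : IsProbabilityMeasure (P.prod Q) := by infer_instance
  refine le_antisymm prob_le_one ?_
  have hsub : ({x : XT | x.1 = 0} ×ˢ {x : XT | x.1 = 0} : Set (XT × XT))
      ⊆ (fun p : XT × XT => p.1 + p.2) ⁻¹' {x : XT | x.1 = 0} := by
    rintro ⟨x, y⟩ ⟨hx, hy⟩
    simp only [Set.mem_preimage, Set.mem_setOf_eq] at *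
    show x.1 + y.1 = 0
    rw [hx, hy, add_zero]
  calc (1:ENNReal) = P {x : XT | x.1 = 0} * Q {x : XT | x.1 = 0} := by rw [hP, hQ, one_mul]
    _ = (P.prod Q) ({x : XT | x.1 = 0} ×ˢ {x : XT | x.1 = 0}) :=
        (Measure.prod_prod _ _).symm
    _ ≤ _ := measure_mono hsub

lemma conj_exp_real_mul_I (r : ℝ) :
    (starRingEnd ℂ) (Complex.exp ((r:ℝ) * Complex.I)) = Complex.exp (((-r : ℝ)) * Complex.I) := by
  rw [← Complex.exp_conj]
  congr 1
  rw [map_mul, Complex.conj_I, Complex.conj_ofReal]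
  push_cast
  ring


lemma negOneCircle_coe : ((negOneCircle : Circle) : ℂ) = -1 := rfl

/-- The mixing measure on `G`. -/
noncomputable def omegaM (κ : ℝ) : Measure XT :=
  ENNReal.ofReal ((1 + κ)/2) • Measure.dirac ((0:ℝ), (0 : Additive Circle))
  + ENNReal.ofReal ((1 - κ)/2) • Measure.dirac ((0:ℝ), Additive.ofMul negOneCircle)

lemma omega_coeff_add (κ : ℝ) (hκ : |κ| ≤ 1) :
    ENNReal.ofReal ((1 + κ)/2) + ENNReal.ofReal ((1 - κ)/2) = 1 := by
  rw [abs_le] at hκ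
  rw [← ENNReal.ofReal_add (by linarith) (by linarith),
    show (1 + κ)/2 + (1 - κ)/2 = 1 by ring, ENNReal.ofReal_one]

lemma omegaM_prob (κ : ℝ) (hκ : |κ| ≤ 1) : IsProbabilityMeasure (omegaM κ) := by
  constructor
  unfold omegaM
  rw [Measure.add_apply, Measure.smul_apply, Measure.smul_apply]
  simp only [measure_univ, smul_eq_mul, mul_one]
  exact omega_coeff_add κ hκ

lemma measurable_setG : MeasurableSet setG := by
  have h1 : MeasurableSet {x : XT | x.1 = 0} := fst_zero_measurable
  have h2 : MeasurableSet {x : XT | x.2.toMul = (1 : Circle) ∨ x.2.toMul = negOneCircle} := by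
    have hs : MeasurableSet ({(1 : Circle), negOneCircle} : Set Circle) :=
      ((Set.finite_singleton negOneCircle).insert 1).measurableSet
    exact hs.preimage (measurable_snd : Measurable fun x : XT => x.2.toMul)
  exact h1.inter h2

lemma mem_setG_one : ((0:ℝ), (0 : Additive Circle)) ∈ setG :=
  ⟨rfl, Or.inl toMul_zero⟩

lemma mem_setG_neg : ((0:ℝ), Additive.ofMul negOneCircle) ∈ setG :=
  ⟨rfl, Or.inr rfl⟩

lemma omegaM_setG (κ : ℝ) (hκ : |κ| ≤ 1) : omegaM κ setG = 1 := by
  unfold omegaM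
  rw [Measure.add_apply, Measure.smul_apply, Measure.smul_apply,
      Measure.dirac_apply' _ measurable_setG, Measure.dirac_apply' _ measurable_setG,
      Set.indicator_of_mem mem_setG_one, Set.indicator_of_mem mem_setG_neg]
  simp only [Pi.one_apply, smul_eq_mul, mul_one]
  exact omega_coeff_add κ hκ

lemma omegaM_fst (κ : ℝ) (hκ : |κ| ≤ 1) : omegaM κ {x : XT | x.1 = 0} = 1 := by
  unfold omegaM
  rw [Measure.add_apply, Measure.smul_apply, Measure.smul_apply,
      Measure.dirac_apply' _ fst_zero_measurable, Measure.dirac_apply' _ fst_zero_measurable,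
      Set.indicator_of_mem (show ((0:ℝ), (0 : Additive Circle)) ∈ {x : XT | x.1 = 0} from rfl),
      Set.indicator_of_mem (show ((0:ℝ), Additive.ofMul negOneCircle) ∈ {x : XT | x.1 = 0} from rfl)]
  simp only [Pi.one_apply, smul_eq_mul, mul_one]
  exact omega_coeff_add κ hκ

lemma chi_omega_one (n : ℤ) : chi 0 n ((0:ℝ), (0 : Additive Circle)) = 1 := by
  unfold chi
  simp

lemma chi_omega_neg (n : ℤ) : chi 0 n ((0:ℝ), Additive.ofMul negOneCircle) = (-1 : ℂ) ^ n := by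
  unfold chi
  rw [circle_coe_zpow]
  simp only [toMul_ofMul, negOneCircle_coe]
  norm_num

lemma omegaM_gM (κ : ℝ) (hκ : |κ| ≤ 1) (n : ℤ) :
    gM (omegaM κ) n = (if Even n then 1 else (κ : ℂ)) := by
  have hp : (0:ℝ) ≤ (1 + κ)/2 := by rw [abs_le] at hκ; linarith
  have hq : (0:ℝ) ≤ (1 - κ)/2 := by rw [abs_le] at hκ; linarith
  have key : gM (omegaM κ) n
      = ((1 + κ)/2 : ℝ) • chi 0 n ((0:ℝ), (0 : Additive Circle))
        + ((1 - κ)/2 : ℝ) • chi 0 n ((0:ℝ), Additive.ofMul negOneCircle) := by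
    rw [gM_eq_charXT]
    unfold charXT omegaM
    rw [integral_add_measure
        ((integrable_chi (Measure.dirac _) 0 n).smul_measure ENNReal.ofReal_ne_top)
        ((integrable_chi (Measure.dirac _) 0 n).smul_measure ENNReal.ofReal_ne_top),
        integral_smul_measure, integral_smul_measure, integral_dirac, integral_dirac,
        ENNReal.toReal_ofReal hp, ENNReal.toReal_ofReal hq]
  rw [key, chi_omega_one, chi_omega_neg]
  by_cases he : Even n
  · rw [if_pos he, he.neg_one_zpow]
    simp only [Complex.real_smul, mul_one]
    push_cast
    ring
  · rw [if_neg he, (Int.not_even_iff_odd.mp he).neg_one_zpow]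
    simp only [Complex.real_smul, mul_one]
    push_cast
    ring

end Heyde

open Heyde

/-- Case `a > 0` for `α(t,z) = (a·t, e^{i·b·t}·z⁻¹)` on `ℝ × 𝕋`: shifts of the
distributions are concentrated on `{0} × 𝕋` and one is a factor of the other by a
measure on `G`. -/
theorem heyde_R_T_inversion_pos_a (a b : ℝ) (ha : 0 < a)
    (μ₁ μ₂ : Measure XT) [IsProbabilityMeasure μ₁] [IsProbabilityMeasure μ₂]
    (hsym :
      Measure.map (fun p : XT × XT => (p.1 + p.2, p.1 + alphaXTinv a b p.2))
          (μ₁.prod μ₂) =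
        Measure.map (fun p : XT × XT => (p.1 + p.2, -(p.1 + alphaXTinv a b p.2)))
          (μ₁.prod μ₂)) :
    ∃ x₁ x₂ : XT,
      Measure.conv μ₁ (Measure.dirac (-x₁)) {x : XT | x.1 = 0} = 1 ∧
      Measure.conv μ₂ (Measure.dirac (-x₂)) {x : XT | x.1 = 0} = 1 ∧
      ∃ ω : Measure XT, IsProbabilityMeasure ω ∧ ω setG = 1 ∧
        (Measure.conv μ₂ (Measure.dirac (-x₂)) =
            Measure.conv (Measure.conv μ₁ (Measure.dirac (-x₁))) ω ∨
          Measure.conv μ₁ (Measure.dirac (-x₁)) =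
            Measure.conv (Measure.conv μ₂ (Measure.dirac (-x₂))) ω) := by
  classical
  obtain ⟨⟨c₁, hc1⟩, ⟨c₂, hc2⟩⟩ := marginals_degenerate a b ha μ₁ μ₂ hsym
  set x₁ : XT := (c₁, (0 : Additive Circle)) with hx₁
  set x₂ : XT := (c₂, Additive.ofMul (Circle.exp (b * c₂))) with hx₂
  set lam₁ := Measure.conv μ₁ (Measure.dirac (-x₁)) with hlam₁
  set lam₂ := Measure.conv μ₂ (Measure.dirac (-x₂)) with hlam₂
  haveI hP1 : IsProbabilityMeasure lam₁ := by rw [hlam₁]; infer_instance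
  haveI hP2 : IsProbabilityMeasure lam₂ := by rw [hlam₂]; infer_instance
  have hlam₁m : lam₁ = Measure.map (fun x : XT => x + (-x₁)) μ₁ := conv_dirac_eq μ₁ (-x₁)
  have hlam₂m : lam₂ = Measure.map (fun x : XT => x + (-x₂)) μ₂ := conv_dirac_eq μ₂ (-x₂)
  have hconc : ∀ (μ : Measure XT) (c : ℝ) (y : XT), IsProbabilityMeasure μ → y.1 = -c →
      μ {x : XT | x.1 = c} = 1 →
      (Measure.map (fun x : XT => x + y) μ) {x : XT | x.1 = 0} = 1 := by
    intro μ c y _ hy hμ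
    rw [Measure.map_apply (measurable_add_const y) fst_zero_measurable]
    have hpre : (fun x : XT => x + y) ⁻¹' {x : XT | x.1 = 0} = {x : XT | x.1 = c} := by
      ext x
      simp only [Set.mem_preimage, Set.mem_setOf_eq]
      show x.1 + y.1 = 0 ↔ x.1 = c
      rw [hy]
      constructor <;> intro h <;> linarith
    rw [hpre]
    exact hμ
  have hconc₁ : lam₁ {x : XT | x.1 = 0} = 1 := by
    rw [hlam₁m]
    exact hconc μ₁ c₁ (-x₁) ‹_› rfl hc1
  have hconc₂ : lam₂ {x : XT | x.1 = 0} = 1 := by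
    rw [hlam₂m]
    exact hconc μ₂ c₂ (-x₂) ‹_› rfl hc2
  -- Fourier coefficients of the shifted measures
  have hchi₁ : ∀ n : ℤ, chi 0 n (-x₁) = 1 := by
    intro n
    unfold chi
    rw [hx₁]
    simp
  have hchi₂ : ∀ n : ℤ, chi 0 n (-x₂)
      = Complex.exp ((-(b * c₂ * (n:ℝ)) : ℝ) * Complex.I) := by
    intro n
    unfold chi
    rw [hx₂]
    have h2 : ((-((c₂ : ℝ), Additive.ofMul (Circle.exp (b * c₂))) : XT).2).toMul
        = (Circle.exp (b * c₂))⁻¹ := rfl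
    rw [h2, inv_zpow, ← zpow_neg, circle_coe_zpow, Circle.coe_exp, ← Complex.exp_int_mul]
    have h3 : ((0 * (-((c₂ : ℝ), Additive.ofMul (Circle.exp (b * c₂))) : XT).1 : ℝ) : ℂ)
        * Complex.I = 0 := by
      norm_num
    rw [h3, Complex.exp_zero, one_mul]
    congr 1
    push_cast
    ring
  have hgl₁ : ∀ n : ℤ, gM lam₁ n = gM μ₁ n := by
    intro n
    rw [gM_eq_charXT, hlam₁m, charXT_map_add μ₁ (-x₁) 0 n, hchi₁ n, mul_one, ← gM_eq_charXT]
  have hgl₂ : ∀ n : ℤ, gM lam₂ n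
      = Complex.exp ((-(b * c₂ * (n:ℝ)) : ℝ) * Complex.I) * gM μ₂ n := by
    intro n
    rw [gM_eq_charXT, hlam₂m, charXT_map_add μ₂ (-x₂) 0 n, hchi₂ n, ← gM_eq_charXT, mul_comm]
  -- apply the kappa extraction
  obtain ⟨κ, hκ, hdisj⟩ := kappa_extract (fun n => gM μ₁ n)
    (fun n => Complex.exp ((-(b * c₂ * (n:ℝ)) : ℝ) * Complex.I) * gM μ₂ n)
    (gM_zero μ₁)
    (by
      show Complex.exp ((-(b * c₂ * ((0:ℤ):ℝ)) : ℝ) * Complex.I) * gM μ₂ 0 = 1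
      rw [gM_zero μ₂, mul_one]
      norm_num)
    (fun n => gM_neg μ₁ n)
    (by
      intro n
      show Complex.exp ((-(b * c₂ * ((-n:ℤ):ℝ)) : ℝ) * Complex.I) * gM μ₂ (-n)
        = (starRingEnd ℂ) (Complex.exp ((-(b * c₂ * ((n:ℤ):ℝ)) : ℝ) * Complex.I) * gM μ₂ n)
      rw [map_mul, ← gM_neg, conj_exp_real_mul_I]
      congr 2
      push_cast
      ring)
    (fun p q hpq => parityEq a b μ₁ μ₂ c₁ c₂ hsym hc1 hc2 p q hpq)
  haveI hωP : IsProbabilityMeasure (omegaM κ) := omegaM_prob κ hκ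
  refine ⟨x₁, x₂, hconc₁, hconc₂, omegaM κ, hωP, omegaM_setG κ hκ, ?_⟩
  rcases hdisj with hd | hd
  · left
    apply xt_unique lam₂ (Measure.conv lam₁ (omegaM κ)) hconc₂
      (conv_conc lam₁ (omegaM κ) hconc₁ (omegaM_fst κ hκ))
    intro n
    rw [hgl₂ n, gM_eq_charXT (Measure.conv lam₁ (omegaM κ)), charXT_conv lam₁ (omegaM κ) 0 n,
        ← gM_eq_charXT, ← gM_eq_charXT, hgl₁ n, omegaM_gM κ hκ n]
    exact hd n
  · right
    apply xt_unique lam₁ (Measure.conv lam₂ (omegaM κ)) hconc₁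
      (conv_conc lam₂ (omegaM κ) hconc₂ (omegaM_fst κ hκ))
    intro n
    rw [hgl₁ n, gM_eq_charXT (Measure.conv lam₂ (omegaM κ)), charXT_conv lam₂ (omegaM κ) 0 n,
        ← gM_eq_charXT, ← gM_eq_charXT, hgl₂ n, omegaM_gM κ hκ n]
    exact hd n
end

section
/- Let X be a second-countable locally compact Hausdorff Abelian topological group (with its Borel σ-algebra), let G be a Borel-measurable subgroup of X, and let μ, μ_1, μ_2 be probability measures on X such that μ(G) = 1 and μ = μ_1 * μ_2. Then there exists x ∈ X such that (μ_1 * δ_x)(G) = 1 and (μ_2 * δ_{−x})(G) = 1; that is, suitable shifts of μ_1 and μ_2 are concentrated on G. -/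
open MeasureTheory

lemma conv_dirac_apply' {X : Type*} [AddCommGroup X]
    [TopologicalSpace X] [IsTopologicalAddGroup X]
    [SecondCountableTopology X] [MeasurableSpace X] [BorelSpace X]
    (ν : Measure X) [SFinite ν] (x : X) (s : Set X) (hs : MeasurableSet s) :
    Measure.conv ν (Measure.dirac x) s = ν {a | a + x ∈ s} := by
  unfold Measure.conv
  rw [Measure.prod_dirac, Measure.map_map (by measurability) (by measurability),
    Measure.map_apply (by measurability) hs]
  rfl

/-- Lemma 2.3: if a probability measure `μ` concentrated on a Borel subgroup `G` of a
second-countable locally compact Abelian group `X` factors as `μ = μ₁ ∗ μ₂`, then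
suitable shifts of `μ₁` and `μ₂` are concentrated on `G`. -/
theorem shifts_of_factors_concentrated_on_subgroup (X : Type*) [AddCommGroup X]
    [TopologicalSpace X] [IsTopologicalAddGroup X] [LocallyCompactSpace X] [T2Space X]
    [SecondCountableTopology X] [MeasurableSpace X] [BorelSpace X]
    (G : AddSubgroup X) (hG : MeasurableSet (G : Set X))
    (μ μ₁ μ₂ : Measure X) [IsProbabilityMeasure μ] [IsProbabilityMeasure μ₁]
    [IsProbabilityMeasure μ₂]
    (hμG : μ (G : Set X) = 1) (hconv : μ = Measure.conv μ₁ μ₂) :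
    ∃ x : X,
      Measure.conv μ₁ (Measure.dirac x) (G : Set X) = 1 ∧
      Measure.conv μ₂ (Measure.dirac (-x)) (G : Set X) = 1 := by
  have hadd : Measurable (fun p : X × X => p.1 + p.2) := by measurability
  have hT : MeasurableSet {p : X × X | p.1 + p.2 ∈ (G : Set X)} :=
    hadd hG
  have hprod : (μ₁.prod μ₂) {p : X × X | p.1 + p.2 ∈ (G : Set X)} = 1 := by
    rw [hconv] at hμG
    unfold Measure.conv at hμG
    rwa [Measure.map_apply hadd hG] at hμG
  have hcompl : (μ₁.prod μ₂) {p : X × X | p.1 + p.2 ∈ (G : Set X)}ᶜ = 0 :=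
    (prob_compl_eq_zero_iff hT).mpr hprod
  have hSm : ∀ a : X, MeasurableSet {b | a + b ∈ (G : Set X)} :=
    fun a => (measurable_const_add a) hG
  have hae : ∀ᵐ a ∂μ₁, μ₂ {b | a + b ∈ (G : Set X)} = 1 := by
    have := (Measure.measure_prod_null hT.compl).mp hcompl
    filter_upwards [this] with a ha
    have : μ₂ {b | a + b ∈ (G : Set X)}ᶜ = 0 := ha
    exact (prob_compl_eq_zero_iff (hSm a)).mp this
  obtain ⟨a₀, ha₀⟩ := hae.exists
  refine ⟨-a₀, ?_, ?_⟩
  · rw [conv_dirac_apply' μ₁ (-a₀) _ hG]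
    have hae2 : ∀ᵐ a ∂μ₁, a + -a₀ ∈ (G : Set X) := by
      filter_upwards [hae] with a ha
      -- S a ∩ S a₀ nonempty
      have hne : ({b | a + b ∈ (G : Set X)} ∩ {b | a₀ + b ∈ (G : Set X)}).Nonempty := by
        by_contra h
        rw [Set.not_nonempty_iff_eq_empty, ← Set.disjoint_iff_inter_eq_empty] at h
        have hsub := h.subset_compl_right
        have : μ₂ {b | a + b ∈ (G : Set X)} ≤ μ₂ {b | a₀ + b ∈ (G : Set X)}ᶜ :=
          measure_mono hsub
        rw [ha, (prob_compl_eq_zero_iff (hSm a₀)).mpr ha₀] at this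
        simp at this
      obtain ⟨b, hb1, hb2⟩ := hne
      have : (a + b) - (a₀ + b) ∈ G := sub_mem hb1 hb2
      simpa [sub_eq_add_neg, add_comm, add_left_comm, add_assoc] using this
    have hm : MeasurableSet {a : X | a + -a₀ ∈ (G : Set X)} := (measurable_add_const (-a₀)) hG
    rw [← prob_compl_eq_zero_iff hm]
    rw [ae_iff] at hae2
    exact hae2
  · rw [neg_neg, conv_dirac_apply' μ₂ a₀ _ hG]
    have : {b | b + a₀ ∈ (G : Set X)} = {b | a₀ + b ∈ (G : Set X)} := by
      ext b; simp [add_comm]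
    rw [this]; exact ha₀
end
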